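/- Let A ∈ ℝ^{N×N} with ρ(A) < 1 and let f, g : M → ℝ^N both satisfy the consistency relation h(φ(x)) = A h(x) + C ω(φ(x)) for all x ∈ M, where φ : M → M is a bijection with bounded orbits under f − g (i.e., sup over all x and iterates of ‖f(x) − g(x)‖ is finite). Then f = g. -/

import Mathlib

open Matrix Filter Topology MeasureTheory ProbabilityTheory

attribute [local instance] Matrix.linftyOpNormedRing Matrix.linftyOpNormedAddCommGroup

/-- The spectral radius of a real square matrix: the maximum modulus of its complex
eigenvalues. -/
noncomputable def specRad {N : ℕ} (A : Matrix (Fin N) (Fin N) ℝ) : ℝ :=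
  sSup ((fun z : ℂ => ‖z‖) '' spectrum ℂ (A.map Complex.ofReal))

attribute [local instance] Matrix.linftyOpNormedAlgebra

-- auxiliary: norm of complexification of powers equals norm of powers
lemma map_ofReal_nnnorm {N : ℕ} (A : Matrix (Fin N) (Fin N) ℝ) :
    ‖A.map (Complex.ofReal)‖₊ = ‖A‖₊ := by
  simp only [Matrix.linfty_opNNNorm_def, Matrix.map_apply, Complex.nnnorm_real]

lemma norm_pow_tendsto_zero {N : ℕ} (A : Matrix (Fin N) (Fin N) ℝ)
    (hN : 0 < N) (hA : specRad A < 1) :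
    Filter.Tendsto (fun n : ℕ => ‖A ^ n‖) atTop (𝓝 0) := by
  haveI : Nonempty (Fin N) := Fin.pos_iff_nonempty.mp hN
  set B : Matrix (Fin N) (Fin N) ℂ := A.map Complex.ofReal with hB
  -- spectral radius bound
  have hspec : spectralRadius ℂ B < 1 := by
    have hbdd : BddAbove ((fun z : ℂ => ‖z‖) '' spectrum ℂ B) :=
      ((spectrum.isCompact B).image continuous_norm).bddAbove
    have hle : ∀ k ∈ spectrum ℂ B, (‖k‖₊ : ENNReal) ≤ ENNReal.ofReal (specRad A) := by
      intro k hk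
      have : ‖k‖ ≤ specRad A := le_csSup hbdd ⟨k, hk, rfl⟩
      rw [← enorm_eq_nnnorm, ← ofReal_norm]
      exact ENNReal.ofReal_le_ofReal (by simpa using this)
    calc spectralRadius ℂ B ≤ ENNReal.ofReal (specRad A) := iSup₂_le hle
      _ < 1 := ENNReal.ofReal_lt_one.mpr hA
  -- Gelfand's formula
  have hG := spectrum.pow_nnnorm_pow_one_div_tendsto_nhds_spectralRadius B
  obtain ⟨r, hr1, hr2⟩ := ENNReal.lt_iff_exists_nnreal_btwn.mp hspec
  have hev : ∀ᶠ n : ℕ in atTop, (‖B ^ n‖₊ : ENNReal) ^ (1 / (n : ℝ)) < (r : ENNReal) :=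
    hG.eventually_lt_const hr1
  have hev2 : ∀ᶠ n : ℕ in atTop, ‖A ^ n‖ ≤ (r : ℝ) ^ n := by
    filter_upwards [hev, Filter.eventually_ge_atTop 1] with n hn hn1
    have hne : (n : ℝ) ≠ 0 := by positivity
    have : ((‖B ^ n‖₊ : ENNReal) ^ (1 / (n : ℝ))) ^ (n : ℝ) ≤ ((r : ENNReal)) ^ (n : ℝ) :=
      ENNReal.rpow_le_rpow hn.le (by positivity)
    rw [← ENNReal.rpow_mul, one_div, inv_mul_cancel₀ hne, ENNReal.rpow_one,
      ENNReal.rpow_natCast, ← ENNReal.coe_pow, ENNReal.coe_le_coe] at this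
    have hmap : B ^ n = (A ^ n).map Complex.ofReal := by
      have h2 := map_pow (Complex.ofRealHom.mapMatrix (m := Fin N)) A n
      simp only [RingHom.mapMatrix_apply] at h2
      rw [hB]
      convert h2.symm using 2 <;> rfl
    have hBA : ‖B ^ n‖₊ = ‖A ^ n‖₊ := by rw [hmap, map_ofReal_nnnorm]
    rw [hBA] at this
    calc ‖A ^ n‖ = ((‖A ^ n‖₊ : NNReal) : ℝ) := (coe_nnnorm _).symm
      _ ≤ (((r : NNReal) ^ n : NNReal) : ℝ) := by exact_mod_cast this
      _ = (r : ℝ) ^ n := by push_cast; ring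
  have hr1' : (r : ℝ) < 1 := by exact_mod_cast hr2
  exact squeeze_zero' (Filter.Eventually.of_forall fun n => norm_nonneg _) hev2
    (tendsto_pow_atTop_nhds_zero_of_lt_one r.coe_nonneg hr1')

theorem stmt_16 {N d : ℕ} {M : Type*} (A : Matrix (Fin N) (Fin N) ℝ)
    (hA : specRad A < 1) (C : Matrix (Fin N) (Fin d) ℝ)
    (φ : M ≃ M) (ω : M → Fin d → ℝ)
    (f g : M → Fin N → ℝ)
    (hfc : ∀ x, f (φ x) = A.mulVec (f x) + C.mulVec (ω (φ x)))
    (hgc : ∀ x, g (φ x) = A.mulVec (g x) + C.mulVec (ω (φ x)))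
    (hbdd : ∃ K : ℝ, ∀ x, ‖f x - g x‖ ≤ K) :
    f = g := by
  rcases Nat.eq_zero_or_pos N with hN | hN
  · subst hN
    funext x j
    exact j.elim0
  obtain ⟨K, hK⟩ := hbdd
  set h : M → Fin N → ℝ := fun x => f x - g x with hh
  have hstep : ∀ x, h (φ x) = A.mulVec (h x) := by
    intro x
    simp only [hh, hfc x, hgc x, Matrix.mulVec_sub]
    abel
  have hiter : ∀ (n : ℕ) (x : M), h (φ^[n] x) = (A ^ n).mulVec (h x) := by
    intro n
    induction n with
    | zero => intro x; simp [Matrix.mulVec_one]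
    | succ n ih =>
        intro x
        rw [Function.iterate_succ_apply', hstep, ih, Matrix.mulVec_mulVec, ← pow_succ']
  have hbound : ∀ (x : M) (n : ℕ), ‖h x‖ ≤ ‖A ^ n‖ * K := by
    intro x n
    have hx : h x = (A ^ n).mulVec (h ((φ.symm : M → M)^[n] x)) := by
      conv_lhs => rw [← Function.LeftInverse.iterate φ.apply_symm_apply n x]
      exact hiter n _
    rw [hx]
    calc ‖(A ^ n).mulVec (h ((φ.symm : M → M)^[n] x))‖
        ≤ ‖A ^ n‖ * ‖h ((φ.symm : M → M)^[n] x)‖ := Matrix.linfty_opNorm_mulVec _ _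
      _ ≤ ‖A ^ n‖ * K := by
          apply mul_le_mul_of_nonneg_left (hK _) (norm_nonneg _)
  have hKn : Filter.Tendsto (fun n : ℕ => ‖A ^ n‖ * K) atTop (𝓝 0) := by
    simpa using (norm_pow_tendsto_zero A hN hA).mul_const K
  have : ∀ x, h x = 0 := by
    intro x
    have : ‖h x‖ ≤ 0 := ge_of_tendsto' hKn (fun n => hbound x n)
    simpa using norm_le_zero_iff.mp this
  funext x
  exact sub_eq_zero.mp (this x)
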